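/- In an orthogonal FDSLRM, the NN-DOOLSE objective admits the quadratic-form representation: for every ν = (ν₀, ν₁,…,ν_l) ∈ ℝ^{l+1}, the squared Frobenius norm ‖εε' − Σ_ν‖² with Σ_ν = ν₀I_n + V·diag(ν₁,…,ν_l)·V' equals ν'Gν − 2q'ν + (ε'ε)², where q = (ε'ε, (ε'v₁)², …, (ε'v_l)²)' and G is the (l+1)×(l+1) matrix with G₀₀ = n, G₀ⱼ = Gⱼ₀ = ‖vⱼ‖², Gⱼⱼ = ‖vⱼ‖⁴ for j = 1,…,l, and Gᵢⱼ = 0 for distinct i, j ≥ 1. -/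

import Mathlib

open Matrix

/-- Quadratic-form representation of the NN-DOOLSE objective in an orthogonal
FDSLRM: `‖εε' − Σ_ν‖² = ν'Gν − 2q'ν + (ε'ε)²` (Frobenius norm, i.e. the trace
inner product), where `Σ_ν = ν₀I_n + V diag(ν₁,…,ν_l) V'`,
`q = (ε'ε, (ε'v₁)², …, (ε'v_l)²)'` and `G` is the Gram matrix with
`G₀₀ = n`, `G₀ⱼ = Gⱼ₀ = ‖vⱼ‖²`, `Gⱼⱼ = ‖vⱼ‖⁴` and zeros elsewhere. -/
theorem stmt_14 {n k l : ℕ} (hn : 0 < n) (hk : 0 < k) (hl : 0 < l)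
    (hnkl : k + l < n)
    (F : Matrix (Fin n) (Fin k) ℝ) (hF : F.rank = k)
    (V : Matrix (Fin n) (Fin l) ℝ)
    (hcols : ∀ j : Fin l, (fun i => V i j) ≠ 0)
    (nv : Fin l → ℝ) (hnv : ∀ j, nv j = ∑ i, V i j ^ 2)
    (hFV : Fᵀ * V = 0) (hVV : Vᵀ * V = Matrix.diagonal nv)
    (Mf : Matrix (Fin n) (Fin n) ℝ) (hMf : Mf = 1 - F * (Fᵀ * F)⁻¹ * Fᵀ)
    (x : Fin n → ℝ) (ε : Fin n → ℝ) (hε : ε = Mf.mulVec x)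
    (G : Matrix (Fin (l + 1)) (Fin (l + 1)) ℝ)
    (hG00 : G 0 0 = (n : ℝ))
    (hG0j : ∀ j : Fin l, G 0 j.succ = nv j ∧ G j.succ 0 = nv j)
    (hGjj : ∀ j : Fin l, G j.succ j.succ = nv j ^ 2)
    (hGij : ∀ i j : Fin l, i ≠ j → G i.succ j.succ = 0)
    (q : Fin (l + 1) → ℝ)
    (hq0 : q 0 = ∑ i, ε i ^ 2)
    (hqj : ∀ j : Fin l, q j.succ = (∑ i, ε i * V i j) ^ 2) :
    ∀ ν : Fin (l + 1) → ℝ,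
      Matrix.trace
        ((Matrix.vecMulVec ε ε -
            (ν 0 • (1 : Matrix (Fin n) (Fin n) ℝ) +
              (V * Matrix.diagonal (fun j => ν j.succ) : Matrix (Fin n) (Fin l) ℝ) * Vᵀ)) *
         (Matrix.vecMulVec ε ε -
            (ν 0 • (1 : Matrix (Fin n) (Fin n) ℝ) +
              (V * Matrix.diagonal (fun j => ν j.succ) : Matrix (Fin n) (Fin l) ℝ) * Vᵀ))ᵀ)
        = ν ⬝ᵥ G.mulVec ν - 2 * (q ⬝ᵥ ν) + (∑ i, ε i ^ 2) ^ 2 := by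
  intro ν
  set s : ℝ := ∑ i, ε i ^ 2 with hs
  set c : Fin l → ℝ := fun j => ∑ i, ε i * V i j with hc
  set w : Fin l → ℝ := fun j => ν j.succ with hw
  -- entrywise Gram fact
  have hg : ∀ a b : Fin l, (∑ i, V i a * V i b) = if a = b then nv a else 0 := by
    intro a b
    have := congrFun (congrFun hVV a) b
    simpa [Matrix.mul_apply, Matrix.transpose_apply, Matrix.diagonal_apply,
      mul_comm] using this
  -- the matrix entry of the difference
  set C : Matrix (Fin n) (Fin n) ℝ :=
    Matrix.vecMulVec ε ε -
      (ν 0 • (1 : Matrix (Fin n) (Fin n) ℝ) +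
        (V * Matrix.diagonal (fun j => ν j.succ) : Matrix (Fin n) (Fin l) ℝ) * Vᵀ) with hCdef
  have hC : ∀ i j, C i j =
      ε i * ε j - (ν 0 * (if i = j then 1 else 0) + ∑ a, V i a * w a * V j a) := by
    intro i j
    simp only [hCdef, Matrix.sub_apply, Matrix.add_apply, Matrix.vecMulVec_apply,
      Matrix.smul_apply, Matrix.one_apply, Matrix.mul_apply, smul_eq_mul,
      mul_ite, mul_one, mul_zero, hw]
    congr 2
    refine Finset.sum_congr rfl fun a _ => ?_
    rw [Matrix.transpose_apply]
    exact congrArg (· * V j a) (Matrix.mul_diagonal (M := V) (d := fun j => ν j.succ) (i := i) (j := a))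
  -- trace as a double sum of squared entries
  have htr : Matrix.trace (C * Cᵀ) = ∑ i, ∑ j, (C i j) ^ 2 := by
    simp [Matrix.trace, Matrix.mul_apply, Matrix.diag, Matrix.transpose_apply, sq]
  -- six elementary sums
  have L1 : (∑ i, ∑ j, (ε i * ε j) ^ 2) = s ^ 2 := by
    simp only [mul_pow]
    rw [← Finset.sum_mul_sum]
    rw [hs, sq]
  have L2 : (∑ i : Fin n, ∑ j : Fin n,
      (ν 0 * (if i = j then (1:ℝ) else 0)) ^ 2) = (n : ℝ) * ν 0 ^ 2 := by
    simp [mul_ite, mul_pow, Finset.sum_ite_eq, mul_comm]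
  have L3 : (∑ i, ∑ j, (ε i * ε j) * (ν 0 * (if i = j then (1:ℝ) else 0)))
      = ν 0 * s := by
    simp only [mul_ite, mul_one, mul_zero, Finset.sum_ite_eq, Finset.mem_univ,
      if_true]
    rw [hs, Finset.mul_sum]
    exact Finset.sum_congr rfl fun i _ => by ring
  have L4 : (∑ i, ∑ j, (ε i * ε j) * (∑ a, V i a * w a * V j a))
      = ∑ a, w a * (c a) ^ 2 := by
    have : ∀ i : Fin n, ∀ j : Fin n,
        (ε i * ε j) * (∑ a, V i a * w a * V j a)
          = ∑ a, w a * ((ε i * V i a) * (ε j * V j a)) := by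
      intro i j
      rw [Finset.mul_sum]
      exact Finset.sum_congr rfl fun a _ => by ring
    simp only [this]
    have swap1 : ∀ i : Fin n,
        (∑ j : Fin n, ∑ a : Fin l, w a * (ε i * V i a * (ε j * V j a)))
          = ∑ a : Fin l, ∑ j : Fin n, w a * (ε i * V i a * (ε j * V j a)) :=
      fun i => Finset.sum_comm
    simp only [swap1]
    rw [Finset.sum_comm]
    refine Finset.sum_congr rfl fun a _ => ?_
    rw [hc, sq, Finset.sum_mul_sum, Finset.mul_sum]
    refine Finset.sum_congr rfl fun i _ => ?_
    rw [Finset.mul_sum]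
  have L5 : (∑ i : Fin n, ∑ j : Fin n,
      (ν 0 * (if i = j then (1:ℝ) else 0)) * (∑ a, V i a * w a * V j a))
      = ν 0 * ∑ a, w a * nv a := by
    have hdiag : ∀ i : Fin n,
        (∑ j : Fin n, (ν 0 * (if i = j then (1:ℝ) else 0)) *
          (∑ a, V i a * w a * V j a))
          = ν 0 * ∑ a, V i a * w a * V i a := by
      intro i
      rw [Finset.sum_eq_single i (fun j _ hj => by
          rw [if_neg (Ne.symm hj), mul_zero, zero_mul])
        (fun h => absurd (Finset.mem_univ i) h)]
      rw [if_pos rfl, mul_one]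
    simp only [hdiag, ← Finset.mul_sum]
    congr 1
    rw [Finset.sum_comm]
    refine Finset.sum_congr rfl fun a _ => ?_
    rw [hnv a, Finset.mul_sum]
    exact Finset.sum_congr rfl fun i _ => by ring
  have L6 : (∑ i, ∑ j, (∑ a, V i a * w a * V j a) ^ 2)
      = ∑ a, w a ^ 2 * nv a ^ 2 := by
    have h1 : ∀ i : Fin n,
        (∑ j : Fin n, (∑ a, V i a * w a * V j a) ^ 2)
          = ∑ a : Fin l, (V i a * w a) ^ 2 * nv a := by
      intro i
      have e1 : ∀ j : Fin n, (∑ a, V i a * w a * V j a) ^ 2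
          = ∑ a : Fin l, ∑ b : Fin l,
              ((V i a * w a) * (V i b * w b)) * (V j a * V j b) := by
        intro j
        rw [sq, Finset.sum_mul_sum]
        exact Finset.sum_congr rfl fun a _ => Finset.sum_congr rfl fun b _ => by
          ring
      simp only [e1]
      rw [Finset.sum_comm]
      refine Finset.sum_congr rfl fun a _ => ?_
      have e2 : (∑ j : Fin n, ∑ b : Fin l,
          ((V i a * w a) * (V i b * w b)) * (V j a * V j b))
            = ∑ b : Fin l, ((V i a * w a) * (V i b * w b)) *
                (∑ j, V j a * V j b) := by
        rw [Finset.sum_comm]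
        exact Finset.sum_congr rfl fun b _ => by rw [Finset.mul_sum]
      rw [e2]
      have e3 : ∀ b : Fin l, ((V i a * w a) * (V i b * w b)) *
          (∑ j, V j a * V j b)
            = if a = b then (V i a * w a) * (V i b * w b) * nv a else 0 := by
        intro b
        rw [hg a b]
        split <;> simp
      simp only [e3, Finset.sum_ite_eq, Finset.mem_univ, if_true]
      ring
    simp only [h1]
    rw [Finset.sum_comm]
    refine Finset.sum_congr rfl fun a _ => ?_
    have : (∑ i : Fin n, (V i a * w a) ^ 2 * nv a)
        = w a ^ 2 * nv a * ∑ i, V i a ^ 2 := by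
      rw [Finset.mul_sum]
      exact Finset.sum_congr rfl fun i _ => by ring
    rw [this, ← hnv a]
    ring
  -- expand the square
  have hexp : Matrix.trace (C * Cᵀ)
      = s ^ 2 + (n : ℝ) * ν 0 ^ 2 + (∑ a, w a ^ 2 * nv a ^ 2)
        - 2 * (ν 0 * s) - 2 * (∑ a, w a * (c a) ^ 2)
        + 2 * (ν 0 * ∑ a, w a * nv a) := by
    rw [htr]
    have : ∀ i, ∀ j, (C i j) ^ 2
        = (ε i * ε j) ^ 2 + (ν 0 * (if i = j then (1:ℝ) else 0)) ^ 2
          + (∑ a, V i a * w a * V j a) ^ 2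
          - 2 * ((ε i * ε j) * (ν 0 * (if i = j then (1:ℝ) else 0)))
          - 2 * ((ε i * ε j) * (∑ a, V i a * w a * V j a))
          + 2 * ((ν 0 * (if i = j then (1:ℝ) else 0)) * (∑ a, V i a * w a * V j a)) := by
      intro i j; rw [hC]; ring
    simp only [this, Finset.sum_add_distrib, Finset.sum_sub_distrib,
      ← Finset.mul_sum]
    rw [L1, L2, L3, L4, L5, L6]
  -- right-hand side pieces
  have hqv : q ⬝ᵥ ν = s * ν 0 + ∑ a, (c a) ^ 2 * w a := by
    rw [dotProduct, Fin.sum_univ_succ, hq0]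
    simp only [hqj, hc, hw, hs]
  have hGv : ν ⬝ᵥ G.mulVec ν
      = (n : ℝ) * ν 0 ^ 2 + 2 * (ν 0 * ∑ a, w a * nv a)
        + ∑ a, w a ^ 2 * nv a ^ 2 := by
    simp only [dotProduct, Matrix.mulVec]
    rw [Fin.sum_univ_succ]
    rw [Fin.sum_univ_succ, hG00]
    have hinner : ∀ a : Fin l, (∑ b : Fin l, G a.succ b.succ * ν b.succ)
        = nv a ^ 2 * w a := by
      intro a
      rw [Finset.sum_eq_single a]
      · rw [hGjj a, hw]
      · intro b _ hb; rw [hGij a b (Ne.symm hb), zero_mul]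
      · intro h; exact absurd (Finset.mem_univ a) h
    have : ∀ a : Fin l, ν a.succ * ∑ j, G a.succ j * ν j
        = nv a * ν 0 * w a + nv a ^ 2 * w a ^ 2 := by
      intro a
      rw [Fin.sum_univ_succ, (hG0j a).2, hinner a, hw]
      ring
    simp only [this, (fun a => (hG0j a).1), Finset.sum_add_distrib]
    have e1 : (∑ a : Fin l, nv a * ν 0 * w a) = ν 0 * ∑ a, w a * nv a := by
      rw [Finset.mul_sum]; exact Finset.sum_congr rfl fun a _ => by ring
    have e2 : (∑ a : Fin l, nv a ^ 2 * w a ^ 2) = ∑ a, w a ^ 2 * nv a ^ 2 :=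
      Finset.sum_congr rfl fun a _ => by ring
    have e3 : (∑ a : Fin l, nv a * ν a.succ) = ∑ a, w a * nv a :=
      Finset.sum_congr rfl fun a _ => by rw [hw]; ring
    rw [e1, e2, e3]
    ring
  have hsub : (∑ a, w a * (c a) ^ 2) = ∑ a, (c a) ^ 2 * w a :=
    Finset.sum_congr rfl fun a _ => mul_comm _ _
  rw [hexp, hGv, hqv, hsub]
  ring
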